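/- In KSPM(p), for every k > 0, π(π(k−1)^{↓0}) = π(k), where σ^{↓0} denotes the configuration σ with one unit added to its slope at column 0. That is, the fixed point for k grains can be computed by adding one grain on column 0 of the fixed point for k−1 grains and stabilizing. -/

import Mathlib

def fires (p : ℕ) (b b' : ℕ → ℤ) (i : ℕ) : Prop :=
  (p : ℤ) < b i ∧
  b' i = b i - (p + 1) ∧
  b' (i + p) = b (i + p) + 1 ∧
  (1 ≤ i → b' (i - 1) = b (i - 1) + p) ∧
  ∀ j : ℕ, j ≠ i → j ≠ i + p → (i = 0 ∨ j ≠ i - 1) → b' j = b j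

def kstep (p : ℕ) (b b' : ℕ → ℤ) : Prop := ∃ i, fires p b b' i

def stable (p : ℕ) (b : ℕ → ℤ) : Prop := ∀ i, b i ≤ (p : ℤ)

def initial (N : ℕ) : ℕ → ℤ := fun i => if i = 0 then (N : ℤ) else 0

/-- `σ` with one grain added on column `0` (slope at `0` increased by one). -/
def addGrain (σ : ℕ → ℤ) : ℕ → ℤ := fun i => if i = 0 then σ 0 + 1 else σ i

/-- `b` stabilizes to `c`. -/
def stabilizesTo (p : ℕ) (b c : ℕ → ℤ) : Prop :=
  Relation.ReflTransGen (kstep p) b c ∧ stable p c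

lemma fires_addGrain {p : ℕ} (hp : 0 < p) {b b' : ℕ → ℤ} {i : ℕ}
    (h : fires p b b' i) : fires p (addGrain b) (addGrain b') i := by
  obtain ⟨h1, h2, h3, h4, h5⟩ := h
  have hip : i + p ≠ 0 := by omega
  rcases eq_or_ne i 0 with rfl | hi0
  · refine ⟨?_, ?_, ?_, ?_, ?_⟩
    · simp [addGrain]; omega
    · simp [addGrain]; omega
    · simp only [addGrain, if_neg hip]; exact h3
    · intro hi; omega
    · intro j hj1 hj2 hj3
      have := h5 j hj1 hj2 hj3
      simp only [addGrain, if_neg hj1]; exact this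
  · refine ⟨?_, ?_, ?_, ?_, ?_⟩
    · simp only [addGrain, if_neg hi0]; exact h1
    · simp only [addGrain, if_neg hi0]; exact h2
    · simp only [addGrain, if_neg hip]; exact h3
    · intro hi
      have h4' := h4 hi
      rcases eq_or_ne (i - 1) 0 with h | h
      · rw [h] at h4' ⊢
        simp [addGrain]; omega
      · simp only [addGrain, if_neg h]; exact h4'
    · intro j hj1 hj2 hj3
      have := h5 j hj1 hj2 hj3
      rcases eq_or_ne j 0 with rfl | hj
      · simp [addGrain]; omega
      · simp only [addGrain, if_neg hj]; exact this

lemma rtg_addGrain {p : ℕ} (hp : 0 < p) {b c : ℕ → ℤ}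
    (h : Relation.ReflTransGen (kstep p) b c) :
    Relation.ReflTransGen (kstep p) (addGrain b) (addGrain c) :=
  Relation.ReflTransGen.lift addGrain
    (fun _ _ ⟨i, hi⟩ => ⟨i, fires_addGrain hp hi⟩) _ _ h

/-- `π(π(k-1)^{↓0}) = π(k)`: the fixed point for `k` grains is obtained by
adding one grain on column `0` of the fixed point for `k-1` grains and
stabilizing. -/
theorem pi_recurrence (p k : ℕ) (hp : 0 < p) (hk : 0 < k)
    (c c' : ℕ → ℤ)
    (hc : stabilizesTo p (initial (k - 1)) c)
    (hc' : stabilizesTo p (addGrain c) c') :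
    stabilizesTo p (initial k) c' := by
  have key : initial k = addGrain (initial (k - 1)) := by
    funext i
    by_cases h : i = 0
    · simp [initial, addGrain, h]; omega
    · simp only [initial, addGrain, if_neg h]
  refine ⟨?_, hc'.2⟩
  rw [key]
  exact (rtg_addGrain hp hc.1).trans hc'.1
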